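/- Let (D, h) be a Latvian game (h v ≥ 2 for all v) on a finite loopless digraph with at least two vertices, and let ℓ be a directionless leaf whose unique neighbor is u. Then: (i) if h ℓ ≥ 3, the vertex ℓ is deletable; (ii) if h ℓ = 2 and h u = 2, the game is winnable; (iii) if h ℓ = 2 and h u ≥ 3, the game is winnable if and only if the Latvian game on the restriction of D to V \ {ℓ}, with the hatness of u replaced by ⌈h u / 2⌉, is winnable. -/

import Mathlib

/-- A Czech hat game on the digraph with adjacency `D` (sage `v` sees sage `u`
iff `D v u`), guessness `g`, and hatness `h`, is winnable: there is a strategy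
assigning to each sage `v` a set of `g v` guesses, depending only on the hats
she sees, such that for every coloring some sage guesses her own hat color. -/
def HatGame.Winnable {V : Type*} (D : V → V → Prop) (g h : V → ℕ) : Prop :=
  ∃ F : ∀ v : V, (∀ u : V, Fin (h u)) → Finset (Fin (h v)),
    (∀ (v : V) (c c' : ∀ u : V, Fin (h u)),
        (∀ u : V, D v u → c u = c' u) → F v c = F v c') ∧
    (∀ (v : V) (c : ∀ u : V, Fin (h u)), (F v c).card = g v) ∧
    (∀ c : ∀ u : V, Fin (h u), ∃ v : V, c v ∈ F v c)

open Finset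

set_option linter.unusedSectionVars false

theorem auxA {V : Type*} [Fintype V] [DecidableEq V] (D : V → V → Prop) (h : V → ℕ)
    (hh : ∀ v, 0 < h v) (ℓ : V)
    (hw : HatGame.Winnable (fun a b : {w : V // w ≠ ℓ} => D a b) (fun _ => 1) (fun w => h w)) :
    HatGame.Winnable D (fun _ => 1) h := by
  obtain ⟨F', hview, hcard, hwin⟩ := hw
  refine ⟨fun v c => if hv : v = ℓ then {⟨0, hh v⟩} else F' ⟨v, hv⟩ (fun w' => c ↑w'), ?_, ?_, ?_⟩
  · intro v c c' hcc
    by_cases hv : v = ℓ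
    · simp [hv]
    · simp only [dif_neg hv]
      exact hview ⟨v, hv⟩ _ _ (fun w' hD => hcc ↑w' hD)
  · intro v c
    by_cases hv : v = ℓ
    · simp [hv]
    · simp only [dif_neg hv]; exact hcard _ _
  · intro c
    obtain ⟨v', hv'⟩ := hwin (fun w' => c ↑w')
    exact ⟨↑v', by simpa [dif_neg v'.2] using hv'⟩


theorem auxC {V : Type*} [Fintype V] [DecidableEq V] (D : V → V → Prop) (h : V → ℕ)
    (hh : ∀ v, 2 ≤ h v) (ℓ u : V) (hℓu : ℓ ≠ u)
    (hDlu : D ℓ u) (hDul : D u ℓ) (hl2 : h ℓ = 2) (hu2 : h u = 2) :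
    HatGame.Winnable D (fun _ => 1) h := by
  have hne : u ≠ ℓ := fun e => hℓu e.symm
  refine ⟨fun v c =>
      if hv : v = ℓ then {⟨(c u).val % 2, by rw [hv, hl2]; omega⟩}
      else if hv' : v = u then {⟨(1 - (c ℓ).val) % 2, by rw [hv', hu2]; omega⟩}
      else {⟨0, by have := hh v; omega⟩}, ?_, ?_, ?_⟩
  · intro v c c' hcc
    beta_reduce
    by_cases hv : v = ℓ
    · rw [dif_pos hv, dif_pos hv]
      simp [Fin.mk.injEq, hcc u (hv ▸ hDlu)]
    · by_cases hv' : v = u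
      · rw [dif_neg hv, dif_neg hv, dif_pos hv', dif_pos hv']
        simp [Fin.mk.injEq, hcc ℓ (hv' ▸ hDul)]
      · simp [dif_neg hv, dif_neg hv']
  · intro v c
    beta_reduce
    split_ifs <;> simp
  · intro c
    by_cases hc : ((c u).val % 2) = (c ℓ).val
    · refine ⟨ℓ, ?_⟩
      beta_reduce
      rw [dif_pos rfl, mem_singleton, Fin.ext_iff]
      simp [hc]
    · refine ⟨u, ?_⟩
      beta_reduce
      rw [dif_neg hne, dif_pos rfl, mem_singleton, Fin.ext_iff]
      have h1 : (c u).val < 2 := by have := (c u).isLt; omega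
      have h2 : (c ℓ).val < 2 := by have := (c ℓ).isLt; omega
      simp only [Fin.val_mk]
      omega


section B
variable {V : Type*} [Fintype V] [DecidableEq V]

/-- extend a restricted coloring by giving `ℓ` the hat `a`. -/
def extB (h : V → ℕ) (ℓ : V) (c' : ∀ w' : {w : V // w ≠ ℓ}, Fin (h w'.1)) (a : Fin (h ℓ)) :
    ∀ w : V, Fin (h w) :=
  fun w => if hw : w = ℓ then Fin.cast (by rw [hw]) a else c' ⟨w, hw⟩

open scoped Classical in
noncomputable def fibB (h : V → ℕ) (ℓ u : V)
    (F : ∀ v : V, (∀ w : V, Fin (h w)) → Finset (Fin (h v)))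
    (c' : ∀ w' : {w : V // w ≠ ℓ}, Fin (h w'.1)) (t : Fin (h u)) : Finset (Fin (h ℓ)) :=
  univ.filter (fun a => t ∈ F u (extB h ℓ c' a))

open scoped Classical in
noncomputable def badB (h : V → ℕ) (ℓ u : V)
    (F : ∀ v : V, (∀ w : V, Fin (h w)) → Finset (Fin (h v)))
    (v : {w : V // w ≠ ℓ}) (c' : ∀ w' : {w : V // w ≠ ℓ}, Fin (h w'.1)) :
    Finset (Fin (h v.1)) :=
  univ.filter (fun t => ∃ hv : v.1 = u,
    h ℓ - 1 ≤ (fibB h ℓ u F c' (Fin.cast (congrArg h hv) t)).card)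

set_option linter.unusedSectionVars false in
theorem auxB (D : V → V → Prop) (h : V → ℕ) (hh : ∀ v, 2 ≤ h v)
    (ℓ u : V) (hℓu : ℓ ≠ u) (hin : ∀ w, D w ℓ ↔ w = u)
    (h3 : 3 ≤ h ℓ)
    (hw : HatGame.Winnable D (fun _ => 1) h) :
    HatGame.Winnable (fun a b : {w : V // w ≠ ℓ} => D a b) (fun _ => 1) (fun w => h w) := by
  classical
  obtain ⟨F, hview, hcard, hwin⟩ := hw
  have hl0 : 0 < h ℓ := by have := hh ℓ; omega
  set a0 : Fin (h ℓ) := ⟨0, hl0⟩ with ha0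
  have hune : u ≠ ℓ := fun e => hℓu e.symm
  have hDll : ¬ D ℓ ℓ := fun hD => hℓu ((hin ℓ).1 hD)
  have hextne : ∀ (c' : ∀ w' : {w : V // w ≠ ℓ}, Fin (h w'.1)) (a : Fin (h ℓ)) (w : V)
      (hw : w ≠ ℓ), extB h ℓ c' a w = c' ⟨w, hw⟩ := by
    intro c' a w hw; simp [extB, dif_neg hw]
  have hextℓ : ∀ (c' : ∀ w' : {w : V // w ≠ ℓ}, Fin (h w'.1)) (a : Fin (h ℓ)),
      extB h ℓ c' a ℓ = a := by
    intro c' a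
    simp only [extB, dif_pos rfl]
    exact Fin.ext rfl
  have hfibdis : ∀ (c' : ∀ w' : {w : V // w ≠ ℓ}, Fin (h w'.1)) (t t' : Fin (h u)), t ≠ t' →
      Disjoint (fibB h ℓ u F c' t) (fibB h ℓ u F c' t') := by
    intro c' t t' hne
    rw [Finset.disjoint_left]
    intro a ha ha'
    rw [fibB, mem_filter] at ha ha'
    exact hne (Finset.card_le_one.mp (le_of_eq (hcard u (extB h ℓ c' a))) t ha.2 t' ha'.2)
  have honebad : ∀ (c' : ∀ w' : {w : V // w ≠ ℓ}, Fin (h w'.1)) (t t' : Fin (h u)),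
      h ℓ - 1 ≤ (fibB h ℓ u F c' t).card → h ℓ - 1 ≤ (fibB h ℓ u F c' t').card → t = t' := by
    intro c' t t' ht ht'
    by_contra hne
    have hd := hfibdis c' t t' hne
    have h1 : (fibB h ℓ u F c' t ∪ fibB h ℓ u F c' t').card ≤ (univ : Finset (Fin (h ℓ))).card :=
      card_le_card (subset_univ _)
    rw [card_union_of_disjoint hd, Finset.card_univ, Fintype.card_fin] at h1
    omega
  refine ⟨fun v c' => if (badB h ℓ u F v c').card = 1 then badB h ℓ u F v c'
      else F v.1 (extB h ℓ c' a0), ?_, ?_, ?_⟩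
  · -- view-dependence
    intro v c' d' hagree
    beta_reduce
    by_cases hvu : v.1 = u
    · have hFeq : ∀ a, F u (extB h ℓ c' a) = F u (extB h ℓ d' a) := by
        intro a
        apply hview
        intro w hDw
        by_cases hw : w = ℓ
        · subst hw; rw [hextℓ, hextℓ]
        · rw [hextne c' a w hw, hextne d' a w hw]
          exact hagree ⟨w, hw⟩ (show D v.1 w by rw [hvu]; exact hDw)
      have hfib : ∀ t, fibB h ℓ u F c' t = fibB h ℓ u F d' t := by
        intro t
        unfold fibB
        apply filter_congr
        intro a _
        simp only [hFeq a]
      have hbad : badB h ℓ u F v c' = badB h ℓ u F v d' := by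
        unfold badB
        apply filter_congr
        intro t _
        simp only [hfib]
      have hFv : F v.1 (extB h ℓ c' a0) = F v.1 (extB h ℓ d' a0) := by
        apply hview
        intro w hDw
        by_cases hw : w = ℓ
        · subst hw; rw [hextℓ, hextℓ]
        · rw [hextne c' a0 w hw, hextne d' a0 w hw]
          exact hagree ⟨w, hw⟩ hDw
      rw [hbad, hFv]
    · have hbadc : ∀ e', badB h ℓ u F v e' = ∅ := by
        intro e'
        unfold badB
        apply filter_false_of_mem
        intro t _ ⟨hv, _⟩
        exact hvu hv
      have hFv : F v.1 (extB h ℓ c' a0) = F v.1 (extB h ℓ d' a0) := by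
        apply hview
        intro w hDw
        by_cases hw : w = ℓ
        · exact absurd ((hin v.1).1 (hw ▸ hDw)) hvu
        · rw [hextne c' a0 w hw, hextne d' a0 w hw]
          exact hagree ⟨w, hw⟩ hDw
      rw [hbadc, hbadc, hFv]
  · -- cardinality
    intro v c'
    beta_reduce
    split_ifs with hb
    · exact hb
    · exact hcard v.1 (extB h ℓ c' a0)
  · -- winning
    intro c'
    by_contra hno
    push_neg at hno
    have ht₀ : True := trivial
    -- step 1 : the fiber of c' ⟨u, hune⟩ is small
    have hsmall : (fibB h ℓ u F c' (c' ⟨u, hune⟩)).card ≤ h ℓ - 2 := by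
      by_contra hbig
      push_neg at hbig
      have hbig' : h ℓ - 1 ≤ (fibB h ℓ u F c' (c' ⟨u, hune⟩)).card := by omega
      have hbadeq : badB h ℓ u F ⟨u, hune⟩ c' = {c' ⟨u, hune⟩} := by
        ext t
        rw [mem_singleton]
        unfold badB
        rw [mem_filter]
        constructor
        · rintro ⟨-, hv, hle⟩
          have h1 := honebad c' _ _ hle hbig'
          exact Fin.ext (congrArg Fin.val h1)
        · rintro rfl
          refine ⟨mem_univ _, rfl, ?_⟩
          have hcst : Fin.cast (congrArg h (rfl : ((⟨u, hune⟩ : {w : V // w ≠ ℓ}) : V) = u))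
              (c' ⟨u, hune⟩) = c' ⟨u, hune⟩ := Fin.ext rfl
          rw [hcst]
          exact hbig'
      have hcontra := hno ⟨u, hune⟩
      rw [hbadeq] at hcontra
      simp at hcontra
    -- choose a hat for ℓ outside the fiber and outside ℓ's guess
    have hSl : (F ℓ (extB h ℓ c' a0)).card = 1 := hcard ℓ _
    have hcup : ((fibB h ℓ u F c' (c' ⟨u, hune⟩)) ∪ (F ℓ (extB h ℓ c' a0))).card <
        (univ : Finset (Fin (h ℓ))).card := by
      have := card_union_le (fibB h ℓ u F c' (c' ⟨u, hune⟩)) (F ℓ (extB h ℓ c' a0))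
      rw [Finset.card_univ, Fintype.card_fin]
      omega
    have hneu : ((fibB h ℓ u F c' (c' ⟨u, hune⟩)) ∪ (F ℓ (extB h ℓ c' a0))) ≠ univ := by
      intro he
      rw [he] at hcup
      exact lt_irrefl _ hcup
    obtain ⟨a, -, hamem⟩ :=
      Finset.exists_of_ssubset (Finset.ssubset_univ_iff.mpr hneu)
    -- the extension defeats F
    obtain ⟨v, hv⟩ := hwin (extB h ℓ c' a)
    by_cases hvℓ : ℓ = v
    · subst hvℓ
      rw [hextℓ] at hv
      have heq : F ℓ (extB h ℓ c' a) = F ℓ (extB h ℓ c' a0) := by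
        apply hview
        intro w hDw
        have hw : w ≠ ℓ := fun e => hDll (e ▸ hDw)
        rw [hextne c' a w hw, hextne c' a0 w hw]
      rw [heq] at hv
      exact hamem (mem_union_right _ hv)
    · have hvℓ' : v ≠ ℓ := fun e => hvℓ e.symm
      by_cases hvu : u = v
      · subst hvu
        rw [hextne c' a u hune] at hv
        have : a ∈ fibB h ℓ u F c' (c' ⟨u, hune⟩) := by
          rw [fibB, mem_filter]
          exact ⟨mem_univ a, hv⟩
        exact hamem (mem_union_left _ this)
      · have hvu' : v ≠ u := fun e => hvu e.symm
        have hbadv : badB h ℓ u F ⟨v, hvℓ'⟩ c' = ∅ := by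
          unfold badB
          apply filter_false_of_mem
          intro t _ ⟨hv2, _⟩
          exact hvu' hv2
        have hFveq : F v (extB h ℓ c' a) = F v (extB h ℓ c' a0) := by
          apply hview
          intro w hDw
          have hw : w ≠ ℓ := fun e => hvu' ((hin v).1 (e ▸ hDw))
          rw [hextne c' a w hw, hextne c' a0 w hw]
        rw [hextne c' a v hvℓ', hFveq] at hv
        have hcontra := hno ⟨v, hvℓ'⟩
        rw [hbadv] at hcontra
        simp only [Finset.card_empty, zero_ne_one, if_false] at hcontra
        exact hcontra hv
end B


section D
variable {V : Type*} [Fintype V] [DecidableEq V]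

def hat' (h : V → ℕ) (ℓ u : V) : {w : V // w ≠ ℓ} → ℕ :=
  fun w => if (w : V) = u then (h u + 1) / 2 else h w

/-- a full coloring giving `u` the hat `t` and everyone else hat `0`. -/
def ctD (h : V → ℕ) (hh : ∀ v, 2 ≤ h v) (u : V) (t : Fin (h u)) : ∀ w : V, Fin (h w) :=
  fun w => if hw : w = u then Fin.cast (by rw [hw]) t else ⟨0, by have := hh w; omega⟩

/-- extend a restricted coloring to a full one, via the pair-section `e` at `u`
and hat `a` at `ℓ`. -/
def extD (h : V → ℕ) (ℓ u : V) (e : Fin ((h u + 1) / 2) → Fin (h u)) (a : Fin (h ℓ))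
    (c' : ∀ w' : {w : V // w ≠ ℓ}, Fin (hat' h ℓ u w')) : ∀ w : V, Fin (h w) :=
  fun w =>
    if hw : w = ℓ then Fin.cast (by rw [hw]) a
    else if hw' : w = u then
      Fin.cast (by rw [hw'])
        (e (Fin.cast (show hat' h ℓ u ⟨w, hw⟩ = (h u + 1) / 2 by simp [hat', hw']) (c' ⟨w, hw⟩)))
    else Fin.cast (show hat' h ℓ u ⟨w, hw⟩ = h w by simp [hat', hw']) (c' ⟨w, hw⟩)

/-- interpret a restricted hat as a full hat. -/
def embD (h : V → ℕ) (ℓ u : V) (e : Fin ((h u + 1) / 2) → Fin (h u))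
    (v : {w : V // w ≠ ℓ}) (p : Fin (hat' h ℓ u v)) : Fin (h (v : V)) :=
  if hv : (v : V) = u then
    Fin.cast (by rw [hv]) (e (Fin.cast (show hat' h ℓ u v = (h u + 1) / 2 by simp [hat', hv]) p))
  else Fin.cast (show hat' h ℓ u v = h (v : V) by simp [hat', hv]) p

lemma embD_inj {h : V → ℕ} {ℓ u : V} {e : Fin ((h u + 1) / 2) → Fin (h u)}
    (he : Function.Injective e) (v : {w : V // w ≠ ℓ}) :
    Function.Injective (embD h ℓ u e v) := by
  intro p q hpq
  unfold embD at hpq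
  split_ifs at hpq with hv
  · have h1 := congrArg Fin.val hpq
    simp only [Fin.coe_cast] at h1
    have h2 := he (Fin.ext h1)
    have h3 := congrArg Fin.val h2
    simp only [Fin.coe_cast] at h3
    exact Fin.ext h3
  · have h1 := congrArg Fin.val hpq
    simp only [Fin.coe_cast] at h1
    exact Fin.ext h1

def goodD (h : V → ℕ) (ℓ u : V)
    (F : ∀ v : V, (∀ w : V, Fin (h w)) → Finset (Fin (h v)))
    (e : Fin ((h u + 1) / 2) → Fin (h u)) (a : Fin (h ℓ))
    (v : {w : V // w ≠ ℓ}) (c' : ∀ w' : {w : V // w ≠ ℓ}, Fin (hat' h ℓ u w')) :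
    Finset (Fin (hat' h ℓ u v)) :=
  univ.filter (fun p => embD h ℓ u e v p ∈ F (v : V) (extD h ℓ u e a c'))

set_option linter.unusedSectionVars false in
theorem auxD (D : V → V → Prop) (h : V → ℕ) (hh : ∀ v, 2 ≤ h v)
    (ℓ u : V) (hℓu : ℓ ≠ u)
    (hout : ∀ w, D ℓ w ↔ w = u) (hin : ∀ w, D w ℓ ↔ w = u)
    (hl2 : h ℓ = 2) (hu3 : 3 ≤ h u)
    (hw : HatGame.Winnable D (fun _ => 1) h) :
    HatGame.Winnable (fun a b : {w : V // w ≠ ℓ} => D a b) (fun _ => 1) (hat' h ℓ u) := by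
  classical
  obtain ⟨F, hview, hcard, hwin⟩ := hw
  have hune : u ≠ ℓ := fun e => hℓu e.symm
  have hDlu : D ℓ u := (hout u).2 rfl
  -- find a majority guess value ε for the leaf
  have hsplit : ∃ ε : Fin (h ℓ),
      (h u + 1) / 2 ≤ (univ.filter (fun t : Fin (h u) => ε ∈ F ℓ (ctD h hh u t))).card := by
    by_contra hno
    push_neg at hno
    have h0 : (0 : ℕ) < h ℓ := by omega
    have h1 : (1 : ℕ) < h ℓ := by omega
    have hcover : (univ : Finset (Fin (h u))) ⊆
        (univ.filter (fun t : Fin (h u) => (⟨0, h0⟩ : Fin (h ℓ)) ∈ F ℓ (ctD h hh u t))) ∪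
        (univ.filter (fun t : Fin (h u) => (⟨1, h1⟩ : Fin (h ℓ)) ∈ F ℓ (ctD h hh u t))) := by
      intro t _
      have hne : (F ℓ (ctD h hh u t)).Nonempty := by
        rw [← Finset.card_pos, hcard]
        exact Nat.one_pos
      obtain ⟨g, hg⟩ := hne
      have hgval : g.val = 0 ∨ g.val = 1 := by
        have := g.isLt
        omega
      rcases hgval with hgv | hgv
      · apply mem_union_left
        rw [mem_filter]
        exact ⟨mem_univ _, by rwa [show (⟨0, h0⟩ : Fin (h ℓ)) = g from Fin.ext hgv.symm]⟩
      · apply mem_union_right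
        rw [mem_filter]
        exact ⟨mem_univ _, by rwa [show (⟨1, h1⟩ : Fin (h ℓ)) = g from Fin.ext hgv.symm]⟩
    have hc1 := card_le_card hcover
    have hc2 := card_union_le
      (univ.filter (fun t : Fin (h u) => (⟨0, h0⟩ : Fin (h ℓ)) ∈ F ℓ (ctD h hh u t)))
      (univ.filter (fun t : Fin (h u) => (⟨1, h1⟩ : Fin (h ℓ)) ∈ F ℓ (ctD h hh u t)))
    have hb0 := hno ⟨0, h0⟩
    have hb1 := hno ⟨1, h1⟩
    rw [Finset.card_univ, Fintype.card_fin] at hc1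
    omega
  obtain ⟨ε, hε⟩ := hsplit
  obtain ⟨T', hT'sub, hT'card⟩ := Finset.exists_subset_card_eq hε
  set e : Fin ((h u + 1) / 2) → Fin (h u) := fun p => ((T'.orderIsoOfFin hT'card) p : Fin (h u))
    with he_def
  have he_inj : Function.Injective e := by
    intro p q hpq
    exact (T'.orderIsoOfFin hT'card).injective (Subtype.ext hpq)
  have he_mem : ∀ p, ε ∈ F ℓ (ctD h hh u (e p)) := by
    intro p
    have hmem : e p ∈ T' := ((T'.orderIsoOfFin hT'card) p).2
    exact (mem_filter.mp (hT'sub hmem)).2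
  set aℓ : Fin (h ℓ) := ⟨1 - ε.val, by omega⟩ with haℓ
  have haε : aℓ.val ≠ ε.val := by
    have := ε.isLt
    rw [haℓ]
    simp only []
    omega
  have hm2 : 2 ≤ (h u + 1) / 2 := by omega
  -- extD agreement lemma
  have hextagree : ∀ (v : V) (c' d' : ∀ w' : {w : V // w ≠ ℓ}, Fin (hat' h ℓ u w')),
      (∀ w' : {w : V // w ≠ ℓ}, D v (w' : V) → c' w' = d' w') →
      ∀ w, D v w → extD h ℓ u e aℓ c' w = extD h ℓ u e aℓ d' w := by
    intro v c' d' hagree w hD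
    unfold extD
    by_cases hw : w = ℓ
    · rw [dif_pos hw, dif_pos hw]
    · rw [dif_neg hw, dif_neg hw]
      by_cases hw' : w = u
      · rw [dif_pos hw', dif_pos hw', hagree ⟨w, hw⟩ hD]
      · rw [dif_neg hw', dif_neg hw', hagree ⟨w, hw⟩ hD]
  -- the strategy
  refine ⟨fun v c' => if (goodD h ℓ u F e aℓ v c').card = 1 then goodD h ℓ u F e aℓ v c'
      else {⟨0, by unfold hat'; have := hh (v : V); split_ifs <;> omega⟩}, ?_, ?_, ?_⟩
  · -- view
    intro v c' d' hagree
    beta_reduce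
    have hFeq : F (v : V) (extD h ℓ u e aℓ c') = F (v : V) (extD h ℓ u e aℓ d') :=
      hview _ _ _ (hextagree (v : V) c' d' hagree)
    have hgeq : goodD h ℓ u F e aℓ v c' = goodD h ℓ u F e aℓ v d' := by
      unfold goodD
      apply filter_congr
      intro p _
      rw [hFeq]
    rw [hgeq]
  · -- card
    intro v c'
    beta_reduce
    by_cases hb : (goodD h ℓ u F e aℓ v c').card = 1
    · rw [if_pos hb]; exact hb
    · rw [if_neg hb]; exact card_singleton _
  · -- winning
    intro c'
    -- helper: a correct guess paired back gives a winning restricted guess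
    have hgood : ∀ (v : {w : V // w ≠ ℓ}) (p : Fin (hat' h ℓ u v)),
        embD h ℓ u e v p ∈ F (v : V) (extD h ℓ u e aℓ c') →
        p ∈ goodD h ℓ u F e aℓ v c' ∧ (goodD h ℓ u F e aℓ v c').card = 1 := by
      intro v p hp
      have hmem : p ∈ goodD h ℓ u F e aℓ v c' := by
        unfold goodD
        rw [mem_filter]
        exact ⟨mem_univ _, hp⟩
      refine ⟨hmem, le_antisymm ?_ (card_pos.mpr ⟨p, hmem⟩)⟩
      rw [Finset.card_le_one]
      intro a ha b hb
      unfold goodD at ha hb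
      rw [mem_filter] at ha hb
      exact embD_inj he_inj v
        (Finset.card_le_one.mp (le_of_eq (hcard (v : V) _)) _ ha.2 _ hb.2)
    obtain ⟨v, hv⟩ := hwin (extD h ℓ u e aℓ c')
    by_cases hvℓ : ℓ = v
    · -- impossible: the leaf's guess was dodged
      exfalso
      subst hvℓ
      -- F ℓ of the extension equals F ℓ of the canonical coloring with u-hat e p₀
      have hFℓ : F ℓ (extD h ℓ u e aℓ c') = F ℓ (ctD h hh u
          (e (Fin.cast (show hat' h ℓ u ⟨u, hune⟩ = (h u + 1) / 2 by simp [hat'])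
            (c' ⟨u, hune⟩)))) := by
        apply hview
        intro w hD
        have hwu : w = u := (hout w).1 hD
        subst hwu
        apply Fin.ext
        unfold extD ctD
        rw [dif_neg hune, dif_pos rfl, dif_pos rfl]
      have hεmem := he_mem (Fin.cast (show hat' h ℓ u ⟨u, hune⟩ = (h u + 1) / 2 by simp [hat'])
        (c' ⟨u, hune⟩))
      rw [hFℓ] at hv
      have hexℓ : (extD h ℓ u e aℓ c' ℓ).val = aℓ.val := by
        unfold extD
        rw [dif_pos rfl]
        simp only [Fin.coe_cast]
      have := Finset.card_le_one.mp (le_of_eq (hcard ℓ _)) _ hv _ hεmem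
      have hvals := congrArg Fin.val this
      rw [hexℓ] at hvals
      exact haε hvals
    · have hvℓ' : v ≠ ℓ := fun heq => hvℓ heq.symm
      -- show embD ⟨v⟩ (c' ⟨v⟩) = extension's value at v, then win at v
      have hkey : embD h ℓ u e ⟨v, hvℓ'⟩ (c' ⟨v, hvℓ'⟩) = extD h ℓ u e aℓ c' v := by
        apply Fin.ext
        unfold embD extD
        by_cases hvu : v = u
        · rw [dif_pos hvu, dif_neg hvℓ', dif_pos hvu]
        · rw [dif_neg hvu, dif_neg hvℓ', dif_neg hvu]
      rw [← hkey] at hv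
      obtain ⟨hmem, hcd⟩ := hgood ⟨v, hvℓ'⟩ (c' ⟨v, hvℓ'⟩) hv
      refine ⟨⟨v, hvℓ'⟩, ?_⟩
      beta_reduce
      rw [if_pos hcd]
      exact hmem
end D


section E
variable {V : Type*} [Fintype V] [DecidableEq V]

/-- restrict a full coloring, replacing `u`'s hat by its half -/
def resE (h : V → ℕ) (ℓ u : V) (c : ∀ w : V, Fin (h w)) :
    ∀ w' : {w : V // w ≠ ℓ}, Fin (hat' h ℓ u w') :=
  fun w' => if hw : (w' : V) = u then
      Fin.cast (show (h u + 1) / 2 = hat' h ℓ u w' by simp [hat', hw])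
        ⟨(c u).val / 2, by have := (c u).isLt; omega⟩
    else Fin.cast (show h (w' : V) = hat' h ℓ u w' by simp [hat', hw]) (c w')

def qE {m' : ℕ} (s : Finset (Fin m')) : ℕ := if hs : s.Nonempty then (s.min' hs).val else 0

lemma qE_eq {m' : ℕ} {s : Finset (Fin m')} {a : Fin m'} (ha : a ∈ s) (hc : s.card = 1) :
    qE s = a.val := by
  have hne : s.Nonempty := ⟨a, ha⟩
  rw [qE, dif_pos hne]
  congr 1
  exact Finset.card_le_one.mp (le_of_eq hc) _ (s.min'_mem hne) _ ha

lemma filter_cast_card {n n' : ℕ} (pf : n = n') (s : Finset (Fin n')) :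
    (univ.filter (fun x : Fin n => Fin.cast pf x ∈ s)).card = s.card := by
  subst pf
  have : ∀ x : Fin n, Fin.cast rfl x = x := fun x => Fin.ext rfl
  simp only [this, Finset.filter_mem_eq_inter, Finset.univ_inter]

set_option linter.unusedSectionVars false in
theorem auxE (D : V → V → Prop) (h : V → ℕ) (hh : ∀ v, 2 ≤ h v)
    (ℓ u : V) (hℓu : ℓ ≠ u)
    (hout : ∀ w, D ℓ w ↔ w = u) (hin : ∀ w, D w ℓ ↔ w = u)
    (hl2 : h ℓ = 2) (hu3 : 3 ≤ h u)
    (hw : HatGame.Winnable (fun a b : {w : V // w ≠ ℓ} => D a b) (fun _ => 1) (hat' h ℓ u)) :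
    HatGame.Winnable D (fun _ => 1) h := by
  classical
  obtain ⟨F', hview', hcard', hwin'⟩ := hw
  have hune : u ≠ ℓ := fun e => hℓu e.symm
  have hDlu : D ℓ u := (hout u).2 rfl
  have hDul : D u ℓ := (hin u).2 rfl
  -- agreement of restrictions
  have hres : ∀ (v : V) (c d : ∀ w, Fin (h w)), (∀ w, D v w → c w = d w) →
      ∀ (hv : v ≠ ℓ), F' ⟨v, hv⟩ (resE h ℓ u c) = F' ⟨v, hv⟩ (resE h ℓ u d) := by
    intro v c d hcc hv
    apply hview'
    intro w' hD
    show resE h ℓ u c w' = resE h ℓ u d w'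
    unfold resE
    by_cases hw : (w' : V) = u
    · rw [dif_pos hw, dif_pos hw]
      apply Fin.ext
      simp only [Fin.coe_cast]
      rw [hcc u (hw ▸ hD)]
    · rw [dif_neg hw, dif_neg hw, hcc w' hD]
  refine ⟨fun v c =>
      if hv : v = ℓ then {⟨(c u).val % 2, lt_of_lt_of_le (by omega) (hh v)⟩}
      else if hv' : v = u then
        {⟨min (2 * qE (F' ⟨u, hune⟩ (resE h ℓ u c)) + (1 - (c ℓ).val)) (h v - 1),
          by have := hh v; omega⟩}
      else univ.filter (fun x : Fin (h v) =>
        Fin.cast (show h v = hat' h ℓ u ⟨v, hv⟩ by simp [hat', hv']) x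
          ∈ F' ⟨v, hv⟩ (resE h ℓ u c)), ?_, ?_, ?_⟩
  · -- view
    intro v c d hcc
    beta_reduce
    by_cases hv : v = ℓ
    · rw [dif_pos hv, dif_pos hv]
      simp [Fin.mk.injEq, hcc u (hv ▸ hDlu)]
    · by_cases hv' : v = u
      · rw [dif_neg hv, dif_neg hv, dif_pos hv', dif_pos hv']
        have h1 := hres v c d hcc hv
        have h2 : (⟨u, hune⟩ : {w : V // w ≠ ℓ}) = ⟨v, hv⟩ := by simp [hv']
        have h1' := hres u c d (fun w hw => hcc w (hv' ▸ hw)) hune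
        simp only [h2, h1, h1', hcc ℓ (hv' ▸ hDul)]
      · rw [dif_neg hv, dif_neg hv, dif_neg hv', dif_neg hv']
        apply filter_congr
        intro x _
        rw [hres v c d hcc hv]
  · -- card
    intro v c
    beta_reduce
    by_cases hv : v = ℓ
    · rw [dif_pos hv]; simp
    · by_cases hv' : v = u
      · rw [dif_neg hv, dif_pos hv']; simp
      · rw [dif_neg hv, dif_neg hv']
        rw [filter_cast_card]
        exact hcard' ⟨v, hv⟩ _
  · -- winning
    intro c
    obtain ⟨v', hv'⟩ := hwin' (resE h ℓ u c)
    by_cases hcase : (v' : V) = u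
    · -- the neighbour guessed the half-value right
      have hveq : v' = ⟨u, hune⟩ := Subtype.ext hcase
      subst hveq
      have hq : qE (F' ⟨u, hune⟩ (resE h ℓ u c)) = (c u).val / 2 := by
        rw [qE_eq hv' (hcard' _ _)]
        show (resE h ℓ u c ⟨u, hune⟩).val = (c u).val / 2
        unfold resE
        rw [dif_pos rfl]
        rfl
      by_cases hguess : (c u).val % 2 = (c ℓ).val
      · refine ⟨ℓ, ?_⟩
        beta_reduce
        rw [dif_pos rfl, mem_singleton]
        exact Fin.ext hguess.symm
      · refine ⟨u, ?_⟩
        beta_reduce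
        rw [dif_neg hune, dif_pos rfl, mem_singleton]
        apply Fin.ext
        show (c u).val = min (2 * qE (F' ⟨u, hune⟩ (resE h ℓ u c)) + (1 - (c ℓ).val)) (h u - 1)
        rw [hq]
        have h1 : (c u).val < h u := (c u).isLt
        have h2 : (c ℓ).val < 2 := by have := (c ℓ).isLt; omega
        omega
    · refine ⟨(v' : V), ?_⟩
      beta_reduce
      rw [dif_neg v'.2, dif_neg hcase, mem_filter]
      refine ⟨mem_univ _, ?_⟩
      have hr : resE h ℓ u c v' =
          Fin.cast (show h (v' : V) = hat' h ℓ u v' by simp [hat', hcase]) (c (v' : V)) := by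
        unfold resE
        rw [dif_neg hcase]
      have hfe : Fin.cast (show h (v' : V) = hat' h ℓ u ⟨(v' : V), v'.2⟩ by simp [hat', hcase])
          (c (v' : V)) = resE h ℓ u c v' := by
        rw [hr]
      rw [hfe]
      exact hv'
end E

/-- Leaf handling in Latvian games: a leaf of hatness ≥ 3 is deletable; a
hatness-2 leaf whose neighbor has hatness 2 gives a winnable game; and a
hatness-2 leaf can be deleted after replacing the neighbor's hatness `h u`
by `⌈h u / 2⌉`. -/
theorem latvian_leaf_rules {V : Type*} [Fintype V] [DecidableEq V]
    (D : V → V → Prop) (hloop : ∀ v, ¬ D v v)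
    (h : V → ℕ) (hh : ∀ v, 2 ≤ h v)
    (ℓ u : V) (hℓu : ℓ ≠ u)
    (hout : ∀ w : V, D ℓ w ↔ w = u)
    (hin : ∀ w : V, D w ℓ ↔ w = u) :
    ((3 ≤ h ℓ →
        (HatGame.Winnable (fun a b : {w : V // w ≠ ℓ} => D a b)
            (fun _ => 1) (fun w => h w) ↔
          HatGame.Winnable D (fun _ => 1) h)) ∧
     (h ℓ = 2 → h u = 2 → HatGame.Winnable D (fun _ => 1) h) ∧
     (h ℓ = 2 → 3 ≤ h u →
        (HatGame.Winnable D (fun _ => 1) h ↔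
          HatGame.Winnable (fun a b : {w : V // w ≠ ℓ} => D a b)
            (fun _ => 1)
            (fun w => if (w : V) = u then (h u + 1) / 2 else h w)))) := by
  refine ⟨fun h3 => ⟨fun hw => auxA D h (fun v => by have := hh v; omega) ℓ hw,
      fun hw => auxB D h hh ℓ u hℓu hin h3 hw⟩,
    fun hl2 hu2 => auxC D h hh ℓ u hℓu ((hout u).2 rfl) ((hin u).2 rfl) hl2 hu2,
    fun hl2 hu3 => ⟨fun hw => auxD D h hh ℓ u hℓu hout hin hl2 hu3 hw,
      fun hw => auxE D h hh ℓ u hℓu hout hin hl2 hu3 hw⟩⟩
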